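/- Let D = { z ∈ ℂ : |z − 1| < 1 } and f(z) = z⁴. Then the set f(D) \ f(∂D) = { z⁴ : z ∈ ℂ, |z − 1| < 1 } \ { (1 + exp(iθ))⁴ : θ ∈ ℝ } has exactly two connected components. -/

import Mathlib

open Set Complex Real

noncomputable section Stmt10Aux

private def Gam : Set ℂ := {w : ℂ | ∃ θ : ℝ, w = (1 + Complex.exp ((θ : ℝ) * Complex.I)) ^ 4}
private def Sset : Set ℂ := ((fun z : ℂ => z ^ 4) '' Metric.ball (1 : ℂ) 1) \ Gam
private def E1 : Set ℂ := Metric.ball (1:ℂ) 1 ∩ Metric.ball (Complex.I) 1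
private def B0 : Set ℂ := {z : ℂ | Complex.normSq z < 2 * z.re ∧ 2 * |z.im| < Complex.normSq z}
private def Aset : Set ℂ := (fun z : ℂ => z ^ 4) '' E1
private def Bset : Set ℂ := (fun z : ℂ => z ^ 4) '' B0

private lemma memball_iff (c z : ℂ) : z ∈ Metric.ball c 1 ↔ Complex.normSq (z - c) < 1 := by
  rw [Metric.mem_ball, Complex.dist_eq, ← Complex.sq_norm]
  constructor
  · intro h; nlinarith [norm_nonneg (z - c)]
  · intro h; nlinarith [norm_nonneg (z - c)]

private lemma memball1 (z : ℂ) : z ∈ Metric.ball (1:ℂ) 1 ↔ Complex.normSq z < 2 * z.re := by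
  rw [memball_iff]
  simp [Complex.normSq_apply, Complex.sub_re, Complex.sub_im]
  constructor <;> intro h <;> nlinarith

private lemma memballI (z : ℂ) : z ∈ Metric.ball (Complex.I) 1 ↔ Complex.normSq z < 2 * z.im := by
  rw [memball_iff]
  simp [Complex.normSq_apply, Complex.sub_re, Complex.sub_im]
  constructor <;> intro h <;> nlinarith

private lemma root4 {z ζ : ℂ} (h4 : ζ ^ 4 = z ^ 4) :
    ζ = z ∨ ζ = -z ∨ ζ = Complex.I * z ∨ ζ = -(Complex.I * z) := by
  have h0 : (ζ - z) * (ζ + z) * (ζ - Complex.I * z) * (ζ + Complex.I * z) = 0 := by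
    linear_combination h4 + (z ^ 4 - z ^ 2 * ζ ^ 2) * Complex.I_sq
  rcases mul_eq_zero.1 h0 with h1 | h1
  · rcases mul_eq_zero.1 h1 with h2 | h2
    · rcases mul_eq_zero.1 h2 with h3 | h3
      · exact Or.inl (sub_eq_zero.1 h3)
      · exact Or.inr (Or.inl (eq_neg_of_add_eq_zero_left h3))
    · exact Or.inr (Or.inr (Or.inl (sub_eq_zero.1 h2)))
  · exact Or.inr (Or.inr (Or.inr (eq_neg_of_add_eq_zero_left h1)))

private lemma I_pow_4 : (Complex.I) ^ 4 = 1 := by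
  linear_combination (Complex.I ^ 2 - 1) * Complex.I_sq

private lemma gamma_iff (w : ℂ) :
    w ∈ Gam ↔ ∃ ζ : ℂ, Complex.normSq (ζ - 1) = 1 ∧ w = ζ ^ 4 := by
  constructor
  · rintro ⟨θ, rfl⟩
    refine ⟨1 + Complex.exp ((θ:ℝ) * Complex.I), ?_, rfl⟩
    simp [Complex.normSq_eq_norm_sq, Complex.norm_exp_ofReal_mul_I]
  · rintro ⟨ζ, h1, rfl⟩
    have habs : ‖ζ - 1‖ = 1 := by
      rw [Complex.norm_def, h1, Real.sqrt_one]
    obtain ⟨θ, hθ⟩ := (Complex.norm_eq_one_iff _).1 habs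
    exact ⟨θ, by rw [hθ]; ring⟩

private lemma curve_normSq {ζ : ℂ} (hζ : Complex.normSq (ζ - 1) = 1) :
    Complex.normSq ζ = 2 * ζ.re := by
  simp [Complex.normSq_apply, Complex.sub_re, Complex.sub_im] at hζ ⊢
  nlinarith

private lemma A_not_curve {z ζ : ℂ} (h1 : Complex.normSq z < 2 * z.re)
    (h2 : Complex.normSq z < 2 * z.im)
    (hζ : Complex.normSq (ζ - 1) = 1) (h4 : ζ ^ 4 = z ^ 4) : False := by
  have hn : 0 ≤ Complex.normSq z := Complex.normSq_nonneg z
  have hz1 := curve_normSq hζ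
  rcases root4 h4 with h | h | h | h <;> rw [h] at hz1
  · linarith
  · simp only [Complex.normSq_neg, Complex.neg_re] at hz1; linarith
  · simp only [Complex.normSq_mul, Complex.normSq_I, Complex.mul_re, Complex.I_re,
      Complex.I_im, one_mul, zero_mul] at hz1
    linarith
  · simp only [Complex.normSq_neg, Complex.normSq_mul, Complex.normSq_I, Complex.neg_re,
      Complex.mul_re, Complex.I_re, Complex.I_im, one_mul, zero_mul] at hz1
    linarith

private lemma B_not_curve {z ζ : ℂ} (h1 : Complex.normSq z < 2 * z.re)
    (h2 : 2 * |z.im| < Complex.normSq z)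
    (hζ : Complex.normSq (ζ - 1) = 1) (h4 : ζ ^ 4 = z ^ 4) : False := by
  have hn : 0 ≤ |z.im| := abs_nonneg _
  have ha1 : z.im ≤ |z.im| := le_abs_self _
  have ha2 : -z.im ≤ |z.im| := neg_le_abs _
  have hz1 := curve_normSq hζ
  rcases root4 h4 with h | h | h | h <;> rw [h] at hz1
  · linarith
  · simp only [Complex.normSq_neg, Complex.neg_re] at hz1; linarith
  · simp only [Complex.normSq_mul, Complex.normSq_I, Complex.mul_re, Complex.I_re,
      Complex.I_im, one_mul, zero_mul] at hz1
    linarith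
  · simp only [Complex.normSq_neg, Complex.normSq_mul, Complex.normSq_I, Complex.neg_re,
      Complex.mul_re, Complex.I_re, Complex.I_im, one_mul, zero_mul] at hz1
    linarith

private lemma AB_disjoint {z z' : ℂ} (ha1 : Complex.normSq z < 2 * z.re)
    (ha2 : Complex.normSq z < 2 * z.im)
    (hb1 : Complex.normSq z' < 2 * z'.re) (hb2 : 2 * |z'.im| < Complex.normSq z')
    (h4 : z' ^ 4 = z ^ 4) : False := by
  have hn : 0 ≤ Complex.normSq z := Complex.normSq_nonneg z
  rcases root4 h4 with h | h | h | h <;> rw [h] at hb1 hb2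
  · have := le_abs_self z.im; linarith
  · simp only [Complex.normSq_neg, Complex.neg_re, Complex.neg_im] at hb1 hb2; linarith
  · simp only [Complex.normSq_mul, Complex.normSq_I, Complex.mul_re, Complex.I_re,
      Complex.I_im, one_mul, zero_mul] at hb1
    linarith
  · simp only [Complex.normSq_neg, Complex.normSq_mul, Complex.normSq_I, Complex.neg_re,
      Complex.neg_im, Complex.mul_re, Complex.mul_im, Complex.I_re, Complex.I_im,
      one_mul, zero_mul, abs_neg] at hb1 hb2
    rw [zero_add] at hb2
    linarith [le_abs_self z.re]

private lemma A_sub_S : Aset ⊆ Sset := by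
  rintro w ⟨z, ⟨hz1, hz2⟩, rfl⟩
  rw [memball1] at hz1; rw [memballI] at hz2
  refine ⟨⟨z, (memball1 z).2 hz1, rfl⟩, ?_⟩
  intro hw
  obtain ⟨ζ, hζ, hw4⟩ := (gamma_iff _).1 hw
  exact A_not_curve hz1 hz2 hζ hw4.symm

private lemma B_sub_S : Bset ⊆ Sset := by
  rintro w ⟨z, ⟨hz1, hz2⟩, rfl⟩
  refine ⟨⟨z, (memball1 z).2 hz1, rfl⟩, ?_⟩
  intro hw
  obtain ⟨ζ, hζ, hw4⟩ := (gamma_iff _).1 hw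
  exact B_not_curve hz1 hz2 hζ hw4.symm

private lemma S_cover : Sset ⊆ Aset ∪ Bset := by
  rintro w ⟨⟨z, hz, rfl⟩, hw⟩
  rw [memball1] at hz
  have hz0 : z ≠ 0 := by
    rintro rfl
    simp at hz
  have hnpos : 0 < Complex.normSq z := Complex.normSq_pos.2 hz0
  by_cases him : 2 * |z.im| < Complex.normSq z
  · exact Or.inr ⟨z, ⟨hz, him⟩, rfl⟩
  push_neg at him
  have himne : z.im ≠ 0 := by
    intro h0
    rw [h0] at him; simp at him; linarith
  rcases lt_or_gt_of_ne himne with hneg | hpos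
  · -- z.im < 0 : consider I*z
    rw [abs_of_neg hneg] at him
    rcases eq_or_lt_of_le him with heq | hlt
    · exfalso
      apply hw
      rw [gamma_iff]
      refine ⟨Complex.I * z, ?_, ?_⟩
      · have he : Complex.I * z - 1 = Complex.I * (z + Complex.I) := by
          rw [mul_add, Complex.I_mul_I]; ring
        rw [he, Complex.normSq_mul, Complex.normSq_I, one_mul]
        simp only [Complex.normSq_apply, Complex.add_re, Complex.add_im, Complex.I_re,
          Complex.I_im, add_zero]
        simp only [Complex.normSq_apply] at heq
        nlinarith [heq]
      · show (fun z : ℂ => z ^ 4) z = (Complex.I * z) ^ 4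
        rw [mul_pow, I_pow_4, one_mul]
    · left
      refine ⟨Complex.I * z, ⟨?_, ?_⟩, ?_⟩
      · rw [memball1]
        simp only [Complex.normSq_mul, Complex.normSq_I, Complex.mul_re, Complex.I_re,
          Complex.I_im, one_mul, zero_mul]
        linarith
      · rw [memballI]
        simp only [Complex.normSq_mul, Complex.normSq_I, Complex.mul_im, Complex.I_re,
          Complex.I_im, one_mul, zero_mul]
        linarith
      · show (Complex.I * z) ^ 4 = (fun z : ℂ => z ^ 4) z
        show (Complex.I * z) ^ 4 = z ^ 4
        rw [mul_pow, I_pow_4, one_mul]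
  · -- z.im > 0
    rw [abs_of_pos hpos] at him
    rcases eq_or_lt_of_le him with heq | hlt
    · exfalso
      apply hw
      rw [gamma_iff]
      refine ⟨-(Complex.I * z), ?_, ?_⟩
      · have he : -(Complex.I * z) - 1 = (-Complex.I) * (z - Complex.I) := by
          rw [neg_mul, mul_sub, Complex.I_mul_I]; ring
        rw [he, Complex.normSq_mul, Complex.normSq_neg, Complex.normSq_I, one_mul]
        simp only [Complex.normSq_apply, Complex.sub_re, Complex.sub_im, Complex.I_re,
          Complex.I_im, sub_zero]
        simp only [Complex.normSq_apply] at heq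
        nlinarith [heq]
      · show (fun z : ℂ => z ^ 4) z = (-(Complex.I * z)) ^ 4
        rw [show (-(Complex.I * z)) ^ 4 = (Complex.I * z) ^ 4 by ring, mul_pow, I_pow_4, one_mul]
    · left
      exact ⟨z, ⟨(memball1 z).2 hz, (memballI z).2 hlt⟩, rfl⟩

private lemma pow4_openMap : ∀ s : Set ℂ, IsOpen s → IsOpen ((fun z : ℂ => z ^ 4) '' s) := by
  have han : AnalyticOnNhd ℂ (fun z : ℂ => z ^ 4) Set.univ := by
    intro z _
    exact analyticAt_id.pow 4
  rcases han.is_constant_or_isOpen isPreconnected_univ with ⟨w, hw⟩ | h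
  · exfalso
    have h0 := hw 0 (mem_univ _)
    have h1 := hw 1 (mem_univ _)
    simp at h0 h1
    rw [← h0] at h1
    exact one_ne_zero h1
  · exact fun s hs => h s (subset_univ s) hs

private lemma A_open : IsOpen Aset :=
  pow4_openMap _ ((Metric.isOpen_ball).inter Metric.isOpen_ball)

private lemma B0_open : IsOpen B0 := by
  have h1 : IsOpen {z : ℂ | Complex.normSq z < 2 * z.re} :=
    isOpen_lt Complex.continuous_normSq (by continuity)
  have h2 : IsOpen {z : ℂ | 2 * |z.im| < Complex.normSq z} :=
    isOpen_lt (by continuity) Complex.continuous_normSq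
  exact h1.inter h2

private lemma B_open : IsOpen Bset := pow4_openMap _ B0_open

private lemma A_preconn : IsPreconnected Aset :=
  IsPreconnected.image
    (((convex_ball (1:ℂ) 1).inter (convex_ball Complex.I 1)).isPreconnected) _
    (Continuous.continuousOn (by continuity))

private lemma B0_star : ∀ y ∈ B0, ∀ t ∈ Icc (0:ℝ) 1, (1 - t) • (1:ℂ) + t • y ∈ B0 := by
  rintro y ⟨hy1, hy2⟩ t ⟨ht0, ht1⟩
  have hyim1 : y.im ≤ |y.im| := le_abs_self _
  have hyim2 : -y.im ≤ |y.im| := neg_le_abs _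
  have hre : ((1 - t) • (1:ℂ) + t • y).re = 1 - t + t * y.re := by
    simp [Complex.add_re, Complex.smul_re]
  have him : ((1 - t) • (1:ℂ) + t • y).im = t * y.im := by
    simp [Complex.add_im, Complex.smul_im]
  have hnsq : Complex.normSq ((1 - t) • (1:ℂ) + t • y)
      = (1 - t + t * y.re) ^ 2 + (t * y.im) ^ 2 := by
    rw [Complex.normSq_apply, hre, him]; ring
  simp only [Complex.normSq_apply] at hy1 hy2
  have hm : (y.re - 1) ^ 2 + y.im ^ 2 < 1 := by nlinarith
  constructor
  · rw [hnsq, hre]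
    have key1 : (1 - t + t * y.re) ^ 2 + (t * y.im) ^ 2 - 2 * (1 - t + t * y.re) + 1
        = t ^ 2 * ((y.re - 1) ^ 2 + y.im ^ 2) := by ring
    have ht2 : t ^ 2 ≤ 1 := by nlinarith
    have hprod : t ^ 2 * ((y.re - 1) ^ 2 + y.im ^ 2) < 1 := by
      nlinarith [mul_nonneg (sub_nonneg.2 ht2)
        (by positivity : (0:ℝ) ≤ (y.re - 1) ^ 2 + y.im ^ 2)]
    linarith [key1, hprod]
  · rw [hnsq, him, abs_mul, _root_.abs_of_nonneg ht0]
    have key : (1 - t + t * y.re) ^ 2 + (t * y.im) ^ 2 - t * (y.re ^ 2 + y.im ^ 2)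
        = (1 - t) * (1 - t * ((y.re - 1) ^ 2 + y.im ^ 2)) := by ring
    have hge : 0 ≤ (1 - t) * (1 - t * ((y.re - 1) ^ 2 + y.im ^ 2)) := by
      apply mul_nonneg (by linarith)
      nlinarith [sq_nonneg (y.re - 1), sq_nonneg y.im]
    rcases eq_or_lt_of_le ht0 with h0 | h0
    · rw [← h0]; norm_num
    · have : t * (2 * |y.im|) < t * (y.re ^ 2 + y.im ^ 2) := by
        apply mul_lt_mul_of_pos_left _ h0
        nlinarith
      nlinarith [key, hge, this]

private lemma B0_preconn : IsPreconnected B0 := by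
  have hB : B0 = ⋃₀ {s : Set ℂ | ∃ y ∈ B0, s = segment ℝ (1:ℂ) y} := by
    apply Subset.antisymm
    · intro y hy
      exact ⟨segment ℝ (1:ℂ) y, ⟨y, hy, rfl⟩, right_mem_segment ℝ 1 y⟩
    · rintro x ⟨s, ⟨y, hy, rfl⟩, hx⟩
      rw [segment_eq_image] at hx
      obtain ⟨t, ht, rfl⟩ := hx
      exact B0_star y hy t ht
  rw [hB]
  apply isPreconnected_sUnion (1:ℂ)
  · rintro s ⟨y, hy, rfl⟩
    exact left_mem_segment ℝ 1 y
  · rintro s ⟨y, hy, rfl⟩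
    exact (convex_segment (1:ℂ) y).isPreconnected

private lemma B_preconn : IsPreconnected Bset :=
  IsPreconnected.image B0_preconn _ (Continuous.continuousOn (by continuity))

private lemma neg_one_mem_A : (-1 : ℂ) ∈ Aset := by
  have hc0 : (0:ℝ) < Real.sqrt 2 := Real.sqrt_pos.2 (by norm_num)
  have hc2 : (Real.sqrt 2) ^ 2 = 2 := Real.sq_sqrt (by norm_num)
  have hc1 : 1 < Real.sqrt 2 := by nlinarith
  set r : ℝ := Real.sqrt 2 / 2 with hr
  refine ⟨(r : ℂ) * (1 + Complex.I), ⟨?_, ?_⟩, ?_⟩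
  · rw [memball1]
    have hre : ((r : ℂ) * (1 + Complex.I)).re = r := by
      simp [Complex.mul_re]
    have hnsq : Complex.normSq ((r : ℂ) * (1 + Complex.I)) = 1 := by
      rw [Complex.normSq_mul, Complex.normSq_ofReal]
      simp only [Complex.normSq_apply, Complex.add_re, Complex.add_im, Complex.one_re,
        Complex.one_im, Complex.I_re, Complex.I_im]
      rw [hr]; nlinarith
    rw [hnsq, hre, hr]; linarith
  · rw [memballI]
    have him : ((r : ℂ) * (1 + Complex.I)).im = r := by
      simp [Complex.mul_im]
    have hnsq : Complex.normSq ((r : ℂ) * (1 + Complex.I)) = 1 := by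
      rw [Complex.normSq_mul, Complex.normSq_ofReal]
      simp only [Complex.normSq_apply, Complex.add_re, Complex.add_im, Complex.one_re,
        Complex.one_im, Complex.I_re, Complex.I_im]
      rw [hr]; nlinarith
    rw [hnsq, him, hr]; linarith
  · show ((r : ℂ) * (1 + Complex.I)) ^ 4 = -1
    have hr4 : (r : ℝ) ^ 4 = 1 / 4 := by rw [hr]; nlinarith
    have hnum : (1 + Complex.I) ^ 4 = -4 := by
      linear_combination (Complex.I ^ 2 + 5 + 4 * Complex.I) * Complex.I_sq
    have : ((r : ℂ) * (1 + Complex.I)) ^ 4 = ((r : ℝ) ^ 4 : ℝ) * (1 + Complex.I) ^ 4 := by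
      push_cast; ring
    rw [this, hnum, hr4]
    norm_num

private lemma eight_mem_B : (8 : ℂ) ∈ Bset := by
  refine ⟨((2:ℝ) ^ ((3:ℝ)/4) : ℝ), ⟨?_, ?_⟩, ?_⟩
  · show Complex.normSq _ < 2 * (Complex.ofReal _).re
    rw [Complex.normSq_ofReal, Complex.ofReal_re]
    have h1 : (2:ℝ) ^ ((3:ℝ)/4) < 2 := by
      nth_rewrite 2 [show (2:ℝ) = 2 ^ (1:ℝ) by norm_num]
      exact Real.rpow_lt_rpow_of_exponent_lt (by norm_num) (by norm_num)
    have h0 : (0:ℝ) < (2:ℝ) ^ ((3:ℝ)/4) := Real.rpow_pos_of_pos (by norm_num) _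
    nlinarith
  · show 2 * |(Complex.ofReal _).im| < Complex.normSq _
    rw [Complex.normSq_ofReal, Complex.ofReal_im]
    have h0 : (0:ℝ) < (2:ℝ) ^ ((3:ℝ)/4) := Real.rpow_pos_of_pos (by norm_num) _
    simp only [abs_zero, mul_zero]
    positivity
  · show (Complex.ofReal _) ^ 4 = 8
    rw [← Complex.ofReal_pow]
    norm_cast
    rw [← Real.rpow_natCast ((2:ℝ) ^ ((3:ℝ)/4)) 4, ← Real.rpow_mul (by norm_num)]
    norm_num


private lemma AB_disj : Disjoint Aset Bset := by
  rw [Set.disjoint_left]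
  rintro w ⟨z, ⟨h1, h2⟩, rfl⟩ ⟨z', ⟨h3, h4⟩, heq⟩
  rw [memball1] at h1; rw [memballI] at h2
  exact AB_disjoint h1 h2 h3 h4 heq

private lemma compA : ∀ x ∈ Aset, connectedComponentIn Sset x = Aset := by
  intro x hx
  apply Subset.antisymm
  · exact IsPreconnected.subset_left_of_subset_union A_open B_open AB_disj
      ((connectedComponentIn_subset _ _).trans S_cover)
      ⟨x, mem_connectedComponentIn (A_sub_S hx), hx⟩
      (isPreconnected_connectedComponentIn)
  · exact A_preconn.subset_connectedComponentIn hx A_sub_S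

private lemma compB : ∀ x ∈ Bset, connectedComponentIn Sset x = Bset := by
  intro x hx
  apply Subset.antisymm
  · exact IsPreconnected.subset_right_of_subset_union A_open B_open AB_disj
      ((connectedComponentIn_subset _ _).trans S_cover)
      ⟨x, mem_connectedComponentIn (B_sub_S hx), hx⟩
      (isPreconnected_connectedComponentIn)
  · exact B_preconn.subset_connectedComponentIn hx B_sub_S

end Stmt10Aux

/-- Let `D = {z : |z - 1| < 1}` and `f z = z⁴`.  Then
`f(D) \ f(∂D)` has exactly two connected components. -/
theorem stmt10 :
    ∃ C₁ C₂ : Set ℂ, C₁ ≠ C₂ ∧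
      (∃ x ∈ ((fun z : ℂ => z ^ 4) '' Metric.ball (1 : ℂ) 1) \
          {w : ℂ | ∃ θ : ℝ, w = (1 + Complex.exp ((θ : ℂ) * Complex.I)) ^ 4},
        C₁ = connectedComponentIn (((fun z : ℂ => z ^ 4) '' Metric.ball (1 : ℂ) 1) \
          {w : ℂ | ∃ θ : ℝ, w = (1 + Complex.exp ((θ : ℂ) * Complex.I)) ^ 4}) x) ∧
      (∃ x ∈ ((fun z : ℂ => z ^ 4) '' Metric.ball (1 : ℂ) 1) \
          {w : ℂ | ∃ θ : ℝ, w = (1 + Complex.exp ((θ : ℂ) * Complex.I)) ^ 4},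
        C₂ = connectedComponentIn (((fun z : ℂ => z ^ 4) '' Metric.ball (1 : ℂ) 1) \
          {w : ℂ | ∃ θ : ℝ, w = (1 + Complex.exp ((θ : ℂ) * Complex.I)) ^ 4}) x) ∧
      (∀ C : Set ℂ,
        (∃ x ∈ ((fun z : ℂ => z ^ 4) '' Metric.ball (1 : ℂ) 1) \
            {w : ℂ | ∃ θ : ℝ, w = (1 + Complex.exp ((θ : ℂ) * Complex.I)) ^ 4},
          C = connectedComponentIn (((fun z : ℂ => z ^ 4) '' Metric.ball (1 : ℂ) 1) \
            {w : ℂ | ∃ θ : ℝ, w = (1 + Complex.exp ((θ : ℂ) * Complex.I)) ^ 4}) x) →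
        C = C₁ ∨ C = C₂) := by
  have hset : (((fun z : ℂ => z ^ 4) '' Metric.ball (1 : ℂ) 1) \
      {w : ℂ | ∃ θ : ℝ, w = (1 + Complex.exp ((θ : ℂ) * Complex.I)) ^ 4}) = Sset := rfl
  refine ⟨Aset, Bset, ?_, ?_, ?_, ?_⟩
  · intro h
    have h1 := neg_one_mem_A
    have h2 : (-1 : ℂ) ∈ Bset := h ▸ h1
    exact (Set.disjoint_left.1 AB_disj h1) h2
  · exact ⟨-1, hset ▸ A_sub_S neg_one_mem_A, by rw [hset, compA _ neg_one_mem_A]⟩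
  · exact ⟨8, hset ▸ B_sub_S eight_mem_B, by rw [hset, compB _ eight_mem_B]⟩
  · rintro C ⟨x, hxS, rfl⟩
    rw [hset] at hxS ⊢
    rcases S_cover hxS with hA | hB
    · exact Or.inl (compA _ hA)
    · exact Or.inr (compB _ hB)
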